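/- arXiv:2204.08403 — 2 statements merged into one kernel-verified Lean document; each statement's English description precedes it below -/
import Mathlib

section
/- Convergence of the iteration errors in the degenerate case c₀ = 0: suppose (a_i)_{i≥0}, (b_i)_{i≥0} are sequences of nonnegative reals with a_i ≤ a_{i-1} for all i ≥ 1, with 2μ·b_i² + (1/λ)·a_i² ≤ (1/λ)·a_{i-1}·a_i for all i ≥ 1 (μ, λ > 0), and with a_i ≤ M·b_i for some constant M > 0 and all i. Then a_i → 0 and b_i → 0 as i → ∞. -/
open Filter

/-- Convergence of the iteration errors in the degenerate case `c₀ = 0`: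
if `(a_i)`, `(b_i)` are nonnegative, `(a_i)` is non-increasing,
`2μ b_i² + (1/λ) a_i² ≤ (1/λ) a_{i-1} a_i` for `i ≥ 1`, and `a_i ≤ M b_i`,
then `a_i → 0` and `b_i → 0`. -/
theorem iteration_errors_tendsto_zero_degenerate
    (μ lam M : ℝ) (hμ : 0 < μ) (hlam : 0 < lam) (hM : 0 < M)
    (a b : ℕ → ℝ) (ha : ∀ i, 0 ≤ a i) (hb : ∀ i, 0 ≤ b i)
    (hmono : ∀ i : ℕ, 1 ≤ i → a i ≤ a (i - 1))
    (henergy : ∀ i : ℕ, 1 ≤ i →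
      2 * μ * (b i) ^ 2 + (1 / lam) * (a i) ^ 2 ≤ (1 / lam) * a (i - 1) * a i)
    (hinfsup : ∀ i, a i ≤ M * b i) :
    Tendsto a atTop (nhds 0) ∧ Tendsto b atTop (nhds 0) := by
  -- energy inequality in shifted form
  have hE : ∀ n : ℕ, 2 * μ * (b (n+1)) ^ 2 + (1 / lam) * (a (n+1)) ^ 2
      ≤ (1 / lam) * a n * a (n+1) := by
    intro n
    have := henergy (n+1) (by omega)
    simpa using this
  have hanti : Antitone a := by
    apply antitone_nat_of_succ_le
    intro n
    have := hmono (n+1) (by omega)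
    simpa using this
  have hbdd : BddBelow (Set.range a) := ⟨0, by rintro x ⟨i, rfl⟩; exact ha i⟩
  set s : ℝ := ⨅ i, a i with hs
  have hsa : Tendsto a atTop (nhds s) := tendsto_atTop_ciInf hanti hbdd
  have hs0 : 0 ≤ s := le_ciInf ha
  have hsa' : Tendsto (fun n => a (n+1)) atTop (nhds s) :=
    hsa.comp (tendsto_add_atTop_nat 1)
  -- limit of RHS and LHS bound
  have hR : Tendsto (fun n => (1 / lam) * a n * a (n+1)) atTop
      (nhds ((1 / lam) * s * s)) := by
    exact ((hsa.const_mul (1/lam)).mul hsa')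
  have hL : Tendsto (fun n => 2 * μ * (a (n+1) / M) ^ 2 + (1 / lam) * (a (n+1)) ^ 2)
      atTop (nhds (2 * μ * (s / M) ^ 2 + (1 / lam) * s ^ 2)) := by
    exact (((hsa'.div_const M).pow 2).const_mul (2*μ)).add
      ((hsa'.pow 2).const_mul (1/lam))
  have hkey : 2 * μ * (s / M) ^ 2 + (1 / lam) * s ^ 2 ≤ (1 / lam) * s * s := by
    refine le_of_tendsto_of_tendsto' hL hR ?_
    intro n
    refine le_trans ?_ (hE n)
    have h1 : (a (n+1) / M) ^ 2 ≤ (b (n+1)) ^ 2 := by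
      have : a (n+1) / M ≤ b (n+1) := (div_le_iff₀ hM).2 (by linarith [hinfsup (n+1)])
      exact pow_le_pow_left₀ (div_nonneg (ha _) hM.le) this 2
    nlinarith [hμ]
  have hs_eq : s = 0 := by
    have h1 : 2 * μ * (s / M) ^ 2 ≤ 0 := by nlinarith [hkey]
    have h2 : (s / M) ^ 2 ≤ 0 := by nlinarith [hμ]
    have h3 : s / M = 0 := by
      have := sq_nonneg (s / M)
      have h4 : (s / M) ^ 2 = 0 := le_antisymm h2 this
      exact pow_eq_zero_iff (n := 2) (by norm_num) |>.1 h4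
    field_simp at h3
    simpa using h3
  have hA : Tendsto a atTop (nhds 0) := hs_eq ▸ hsa
  -- now b² → 0 by squeeze
  have hA' : Tendsto (fun n => a (n+1)) atTop (nhds 0) := hs_eq ▸ hsa'
  have hc : Tendsto (fun n => (1 / (2*μ*lam)) * (a n * a (n+1))) atTop (nhds 0) := by
    have := (hA.mul hA').const_mul (1 / (2*μ*lam))
    simpa using this
  have hbsq : Tendsto (fun n => (b (n+1)) ^ 2) atTop (nhds 0) := by
    refine squeeze_zero (fun n => sq_nonneg _) (fun n => ?_) hc
    have h := hE n
    have h2μ : (0:ℝ) < 2*μ*lam := by positivity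
    have hlam' : (0:ℝ) < 1/lam := by positivity
    have hsq : 0 ≤ (1/lam) * (a (n+1))^2 := by positivity
    rw [show (1:ℝ)/(2*μ*lam) * (a n * a (n+1)) = (a n * a (n+1))/(2*μ*lam) by ring,
      le_div_iff₀ h2μ]
    have hmul := mul_le_mul_of_nonneg_right h hlam.le
    have hone : 1 / lam * lam = 1 := by field_simp
    have h6 : 1 / lam * a n * a (n+1) * lam = a n * a (n+1) := by field_simp
    have h5 : 2*μ*lam*(b (n+1))^2 ≤ a n * a (n+1) := by
      calc 2*μ*lam*(b (n+1))^2 = (2*μ*(b (n+1))^2)*lam := by ring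
        _ ≤ (2*μ*(b (n+1))^2 + (1/lam)*(a (n+1))^2)*lam := by nlinarith [hsq, hlam]
        _ ≤ 1/lam * a n * a (n+1) * lam := hmul
        _ = a n * a (n+1) := h6
    linarith [h5]
  have hb' : Tendsto (fun n => b (n+1)) atTop (nhds 0) := by
    have hsqrt : Tendsto (fun n => Real.sqrt ((b (n+1)) ^ 2)) atTop (nhds 0) := by
      have := (Real.continuous_sqrt.tendsto 0).comp hbsq
      simpa [Function.comp_def] using this
    refine hsqrt.congr fun n => ?_
    exact Real.sqrt_sq (hb _)
  have hB : Tendsto b atTop (nhds 0) := (tendsto_add_atTop_iff_nat 1).1 hb'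
  exact ⟨hA, hB⟩
end

section
/- Energy law for the continuous three-field Biot system (formal version): suppose differentiable functions of time u(t) ∈ V, ξ(t) ∈ W, p(t) ∈ M satisfy the three variational equations 2μ(ε(u), ε(v)) − (ξ, div v) = F(v) for all v; (div u_t, φ) + (1/λ)(ξ_t, φ) − (α/λ)(p_t, φ) = 0 for all φ; and ((c₀ + α²/λ)p_t − (α/λ)ξ_t, ψ) + K(∇p, ∇ψ) = G(ψ) for all ψ, where F and G are fixed bounded linear functionals. Then d/dt E(t) + K‖∇p‖² = G(p), where E(t) = μ‖ε(u)‖² + (1/(2λ))‖αp − ξ‖² + (c₀/2)‖p‖² − F(u). -/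
open RealInnerProductSpace

/-- Energy law for the continuous three-field Biot system (abstract version):
if differentiable curves `u(t) ∈ V`, `ξ(t), p(t) ∈ W` satisfy the three
variational equations
`2μ(ε u, ε v) − (ξ, div v) = F(v)`,
`(div u', φ) + (1/λ)(ξ', φ) − (α/λ)(p', φ) = 0`, and
`((c₀ + α²/λ)p' − (α/λ)ξ', ψ) + K(∇p, ∇ψ) = G(ψ)`,
then `d/dt E(t) = G(p(t)) − K‖∇p(t)‖²`, where
`E(t) = μ‖ε u‖² + (1/(2λ))‖αp − ξ‖² + (c₀/2)‖p‖² − F(u)`. -/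
theorem biot_three_field_energy_law
    (V W X G' : Type*)
    [NormedAddCommGroup V] [NormedSpace ℝ V]
    [NormedAddCommGroup W] [InnerProductSpace ℝ W]
    [NormedAddCommGroup X] [InnerProductSpace ℝ X]
    [NormedAddCommGroup G'] [InnerProductSpace ℝ G']
    (μ lam α K c₀ : ℝ) (hμ : 0 < μ) (hlam : 0 < lam) (hα : 0 < α)
    (hK : 0 < K) (hc₀ : 0 ≤ c₀)
    (ε : V →ₗ[ℝ] X)        -- symmetric gradient
    (dv : V →ₗ[ℝ] W)       -- divergence
    (gr : W →ₗ[ℝ] G')      -- gradient (on the pressure space)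
    (F : V →L[ℝ] ℝ) (Gf : W →L[ℝ] ℝ)  -- fixed bounded linear functionals
    (u : ℝ → V) (ξ p : ℝ → W) (u' : ℝ → V) (ξ' p' : ℝ → W)
    (hu : ∀ t, HasDerivAt u (u' t) t)
    (hξ : ∀ t, HasDerivAt ξ (ξ' t) t)
    (hp : ∀ t, HasDerivAt p (p' t) t)
    (hεu : ∀ t, HasDerivAt (fun s => ε (u s)) (ε (u' t)) t)
    (heq1 : ∀ t, ∀ v : V, 2 * μ * ⟪ε (u t), ε v⟫ - ⟪ξ t, dv v⟫ = F v)
    (heq2 : ∀ t, ∀ φ : W,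
      ⟪dv (u' t), φ⟫ + (1 / lam) * ⟪ξ' t, φ⟫ - (α / lam) * ⟪p' t, φ⟫ = 0)
    (heq3 : ∀ t, ∀ ψ : W,
      ⟪(c₀ + α ^ 2 / lam) • p' t - (α / lam) • ξ' t, ψ⟫
        + K * ⟪gr (p t), gr ψ⟫ = Gf ψ) :
    ∀ t : ℝ, HasDerivAt
      (fun s => μ * ‖ε (u s)‖ ^ 2 + (1 / (2 * lam)) * ‖α • p s - ξ s‖ ^ 2
        + (c₀ / 2) * ‖p s‖ ^ 2 - F (u s))
      (Gf (p t) - K * ‖gr (p t)‖ ^ 2) t := by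
  intro t
  have h1 := heq1 t (u' t)
  have h2 := heq2 t (ξ t)
  have h3 := heq3 t (p t)
  have hF : HasDerivAt (fun s => F (u s)) (F (u' t)) t :=
    F.hasFDerivAt.comp_hasDerivAt t (hu t)
  have hw : HasDerivAt (fun s => α • p s - ξ s) (α • p' t - ξ' t) t :=
    ((hp t).const_smul α).sub (hξ t)
  have h1' : HasDerivAt (fun s => ⟪ε (u s), ε (u s)⟫)
      (⟪ε (u t), ε (u' t)⟫ + ⟪ε (u' t), ε (u t)⟫) t := (hεu t).inner ℝ (hεu t)
  have h2' : HasDerivAt (fun s => ⟪α • p s - ξ s, α • p s - ξ s⟫)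
      (⟪α • p t - ξ t, α • p' t - ξ' t⟫ + ⟪α • p' t - ξ' t, α • p t - ξ t⟫) t :=
    hw.inner ℝ hw
  have h3' : HasDerivAt (fun s => ⟪p s, p s⟫)
      (⟪p t, p' t⟫ + ⟪p' t, p t⟫) t := (hp t).inner ℝ (hp t)
  have hsum := (((h1'.const_mul μ).add (h2'.const_mul (1 / (2 * lam)))).add
      (h3'.const_mul (c₀ / 2))).sub hF
  have key : HasDerivAt
      (fun s => μ * ‖ε (u s)‖ ^ 2 + (1 / (2 * lam)) * ‖α • p s - ξ s‖ ^ 2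
        + (c₀ / 2) * ‖p s‖ ^ 2 - F (u s))
      (μ * (⟪ε (u t), ε (u' t)⟫ + ⟪ε (u' t), ε (u t)⟫)
        + 1 / (2 * lam) * (⟪α • p t - ξ t, α • p' t - ξ' t⟫
            + ⟪α • p' t - ξ' t, α • p t - ξ t⟫)
        + c₀ / 2 * (⟪p t, p' t⟫ + ⟪p' t, p t⟫) - F (u' t)) t := by
    simpa only [real_inner_self_eq_norm_sq, Pi.add_def, Pi.sub_def] using hsum
  have hval : μ * (⟪ε (u t), ε (u' t)⟫ + ⟪ε (u' t), ε (u t)⟫)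
        + 1 / (2 * lam) * (⟪α • p t - ξ t, α • p' t - ξ' t⟫
            + ⟪α • p' t - ξ' t, α • p t - ξ t⟫)
        + c₀ / 2 * (⟪p t, p' t⟫ + ⟪p' t, p t⟫) - F (u' t)
      = Gf (p t) - K * ‖gr (p t)‖ ^ 2 := by
    simp only [inner_sub_left, inner_sub_right, real_inner_smul_left,
      real_inner_smul_right, ← real_inner_self_eq_norm_sq] at h1 h2 h3 ⊢
    rw [real_inner_comm (ε (u' t)) (ε (u t)), real_inner_comm (p' t) (p t),
      real_inner_comm (ξ' t) (ξ t), real_inner_comm (ξ' t) (p t),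
      real_inner_comm (p' t) (ξ t), real_inner_comm (dv (u' t)) (ξ t)] at *
    linear_combination h1 + h2 + h3
  exact hval ▸ key
end
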